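/- For real constants a, b not both zero, ∫_0^{2π} ∫_0^1 cos(ar cos φ + br sin φ) (1/r + cos φ) r dφ dr = 2π ∫_0^1 J₀(√(a²+b²) r) dr, where J₀ is the Bessel function of the first kind of order 0. -/

import Mathlib

open Real MeasureTheory intervalIntegral

/-- The Bessel function of the first kind of order `0`. -/
noncomputable def besselJ0 (x : ℝ) : ℝ :=
  ∑' s : ℕ, (-1) ^ s * (x / 2) ^ (2 * s) / ((Nat.factorial s : ℝ)) ^ 2


lemma cos_pow_even_int (s : ℕ) :
    ∫ φ in (0:ℝ)..(2*π), Real.cos φ ^ (2*s)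
      = 2 * π * ((2*s).factorial / (4^s * (s.factorial:ℝ)^2)) := by
  induction s with
  | zero => simp
  | succ k ih =>
    have h : 2 * (k+1) = 2*k + 2 := by ring
    rw [h, integral_cos_pow, ih]
    simp only [Real.sin_two_pi, Real.sin_zero, mul_zero, zero_sub, neg_zero, zero_div, zero_add,
      mul_one, sub_zero]
    have h1 : ((2*k+2).factorial : ℝ) = (2*k+2) * ((2*k+1) * (2*k).factorial) := by
      have e : 2*k+2 = (2*k+1) + 1 := by ring
      rw [e, Nat.factorial_succ, Nat.factorial_succ]
      push_cast; ring
    have h2 : ((k+1).factorial : ℝ) = (k+1) * k.factorial := by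
      rw [Nat.factorial_succ]; push_cast; ring
    rw [h1, h2]
    have hk0 : ((2*k).factorial : ℝ) ≠ 0 := by positivity
    have hk1 : (k.factorial : ℝ) ≠ 0 := by positivity
    push_cast
    field_simp
    ring


lemma bessel_zeroth (c : ℝ) :
    ∫ φ in (0:ℝ)..(2*π), Real.cos (c * Real.cos φ) = 2 * π * besselJ0 c := by
  have h2π : (0:ℝ) ≤ 2*π := by positivity
  set F : ℕ → ℝ → ℝ := fun s φ => (-1)^s * (c * Real.cos φ)^(2*s) / ((2*s).factorial : ℝ)
  have hFi : ∀ s, IntegrableOn (F s) (Set.Ioc 0 (2*π)) volume := by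
    intro s
    apply Continuous.integrableOn_Ioc
    fun_prop
  have hsum : Summable (fun s : ℕ => |c|^(2*s) / ((2*s).factorial : ℝ)) := by
    have := (Real.summable_pow_div_factorial |c|).comp_injective
      (fun m n h => by dsimp at h; omega : Function.Injective (fun n : ℕ => 2*n))
    simpa [Function.comp_def] using this
  have hnorm : Summable fun s : ℕ => ∫ φ in Set.Ioc 0 (2*π), ‖F s φ‖ := by
    apply Summable.of_nonneg_of_le (fun s => integral_nonneg (fun φ => norm_nonneg _))
      (fun s => ?_) (hsum.mul_left (2*π))
    have hb : ∀ φ ∈ Set.Ioc (0:ℝ) (2*π), ‖F s φ‖ ≤ |c|^(2*s) / ((2*s).factorial : ℝ) := by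
      intro φ _
      have : ‖F s φ‖ = |c * Real.cos φ|^(2*s) / ((2*s).factorial : ℝ) := by
        simp only [F, Real.norm_eq_abs, abs_div, abs_mul, abs_pow, abs_neg, abs_one,
          one_pow, one_mul, Nat.abs_cast]
      rw [this, div_le_div_iff_of_pos_right (by positivity : (0:ℝ) < ((2*s).factorial : ℝ))]
      refine pow_le_pow_left₀ (abs_nonneg _) ?_ _
      rw [abs_mul]
      calc |c| * |Real.cos φ| ≤ |c| * 1 := by
            gcongr; exact Real.abs_cos_le_one φ
        _ = |c| := mul_one _
    calc ∫ φ in Set.Ioc 0 (2*π), ‖F s φ‖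
        ≤ ∫ _φ in Set.Ioc 0 (2*π), |c|^(2*s) / ((2*s).factorial : ℝ) := by
          refine setIntegral_mono_on (hFi s).norm ?_ measurableSet_Ioc hb
          exact integrableOn_const (by simp [Real.volume_Ioc, ENNReal.mul_eq_top])
      _ = 2*π * (|c|^(2*s) / ((2*s).factorial : ℝ)) := by
          rw [setIntegral_const]
          simp [Real.volume_Ioc, ENNReal.toReal_ofReal h2π, Real.pi_nonneg]
  have key : ∑' s, ∫ φ in Set.Ioc 0 (2*π), F s φ
      = ∫ φ in Set.Ioc 0 (2*π), ∑' s, F s φ :=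
    integral_tsum_of_summable_integral_norm hFi hnorm
  have hpt : ∀ φ : ℝ, ∑' s, F s φ = Real.cos (c * Real.cos φ) := fun φ =>
    (Real.hasSum_cos (c * Real.cos φ)).tsum_eq
  rw [integral_of_le h2π]
  calc ∫ φ in Set.Ioc 0 (2*π), Real.cos (c * Real.cos φ)
      = ∑' s, ∫ φ in Set.Ioc 0 (2*π), F s φ := by
        rw [key]; congr 1; ext φ; exact (hpt φ).symm
    _ = ∑' s : ℕ, 2 * π * ((-1)^s * (c/2)^(2*s) / ((s.factorial:ℝ))^2) := by
        congr 1; ext s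
        have : ∀ φ : ℝ, F s φ = ((-1)^s * c^(2*s) / ((2*s).factorial : ℝ)) * Real.cos φ ^ (2*s) := by
          intro φ; simp only [F, mul_pow]; ring
        simp_rw [this]
        rw [MeasureTheory.integral_const_mul, ← integral_of_le h2π, cos_pow_even_int]
        have hf0 : ((2*s).factorial : ℝ) ≠ 0 := by positivity
        have hf1 : (s.factorial : ℝ) ≠ 0 := by positivity
        rw [div_pow c 2 (2*s)]
        field_simp
        rw [show (2:ℝ)^(2*s) = 4^s by rw [pow_mul]; norm_num]
    _ = 2 * π * besselJ0 c := by rw [besselJ0, tsum_mul_left]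


lemma half_period_neg {f : ℝ → ℝ} (hc : Continuous f) (hf : ∀ x, f (x + π) = - f x) :
    ∫ x in (0:ℝ)..(2*π), f x = 0 := by
  have h1 : (∫ x in (0:ℝ)..π, f x) + ∫ x in π..(2*π), f x = ∫ x in (0:ℝ)..(2*π), f x :=
    integral_add_adjacent_intervals (hc.intervalIntegrable _ _) (hc.intervalIntegrable _ _)
  have h2 : ∫ x in π..(2*π), f x = ∫ x in (0:ℝ)..π, f (x + π) := by
    rw [integral_comp_add_right]
    norm_num [two_mul]
  have h3 : ∫ x in (0:ℝ)..π, f (x + π) = - ∫ x in (0:ℝ)..π, f x := by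
    simp_rw [hf]
    exact intervalIntegral.integral_neg
  linarith

lemma coeff_cos (c : ℝ) :
    ∫ φ in (0:ℝ)..(2*π), Real.cos (c * Real.cos φ) * Real.cos φ = 0 := by
  apply half_period_neg (by fun_prop)
  intro x
  simp [Real.cos_add_pi, mul_neg, Real.cos_neg]

lemma coeff_sin (c : ℝ) :
    ∫ φ in (0:ℝ)..(2*π), Real.cos (c * Real.cos φ) * Real.sin φ = 0 := by
  apply half_period_neg (by fun_prop)
  intro x
  simp [Real.cos_add_pi, Real.sin_add_pi, mul_neg, Real.cos_neg]

lemma rot_zeroth (u v : ℝ) :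
    ∫ φ in (0:ℝ)..(2*π), Real.cos (u * Real.cos φ + v * Real.sin φ)
      = 2 * π * besselJ0 (Real.sqrt (u^2 + v^2)) := by
  set z : ℂ := u + v * Complex.I with hz
  set c : ℝ := ‖z‖ with hc
  set θ : ℝ := Complex.arg z with hθ
  have hu : c * Real.cos θ = u := by
    rw [hc, hθ, Complex.norm_mul_cos_arg]; simp [hz]
  have hv : c * Real.sin θ = v := by
    rw [hc, hθ, Complex.norm_mul_sin_arg]; simp [hz]
  have hcs : c = Real.sqrt (u^2 + v^2) := by rw [hc, hz, Complex.norm_add_mul_I]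
  have hpt : ∀ φ : ℝ, u * Real.cos φ + v * Real.sin φ = c * Real.cos (φ - θ) := by
    intro φ
    rw [← hu, ← hv, Real.cos_sub]; ring
  simp_rw [hpt]
  have hp : Function.Periodic (fun ψ => Real.cos (c * Real.cos ψ)) (2*π) :=
    Real.cos_periodic.comp (fun y => Real.cos (c * y))
  rw [integral_comp_sub_right (fun ψ => Real.cos (c * Real.cos ψ)) θ]
  have := hp.intervalIntegral_add_eq (0 - θ) 0
  rw [show (0:ℝ) - θ + 2*π = 2*π - θ by ring, zero_add] at this
  rw [this, ← hcs]
  exact bessel_zeroth c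

lemma rot_first (u v : ℝ) :
    ∫ φ in (0:ℝ)..(2*π), Real.cos (u * Real.cos φ + v * Real.sin φ) * Real.cos φ = 0 := by
  set z : ℂ := u + v * Complex.I with hz
  set c : ℝ := ‖z‖ with hc
  set θ : ℝ := Complex.arg z with hθ
  have hu : c * Real.cos θ = u := by
    rw [hc, hθ, Complex.norm_mul_cos_arg]; simp [hz]
  have hv : c * Real.sin θ = v := by
    rw [hc, hθ, Complex.norm_mul_sin_arg]; simp [hz]
  set g : ℝ → ℝ := fun ψ =>
    Real.cos (c * Real.cos ψ) * Real.cos ψ * Real.cos θ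
      - Real.cos (c * Real.cos ψ) * Real.sin ψ * Real.sin θ with hg
  have hpt : ∀ φ : ℝ, Real.cos (u * Real.cos φ + v * Real.sin φ) * Real.cos φ = g (φ - θ) := by
    intro φ
    have h1 : u * Real.cos φ + v * Real.sin φ = c * Real.cos (φ - θ) := by
      rw [← hu, ← hv, Real.cos_sub]; ring
    have h2 : Real.cos φ = Real.cos (φ - θ) * Real.cos θ - Real.sin (φ - θ) * Real.sin θ := by
      rw [← Real.cos_add]; ring_nf
    rw [h1, h2, hg]; ring
  simp_rw [hpt]
  have hp : Function.Periodic g (2*π) := by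
    intro x
    simp only [hg, Real.cos_add_two_pi, Real.sin_add_two_pi]
  rw [integral_comp_sub_right g θ]
  have := hp.intervalIntegral_add_eq (0 - θ) 0
  rw [show (0:ℝ) - θ + 2*π = 2*π - θ by ring, zero_add] at this
  rw [this, hg]
  simp only []
  rw [intervalIntegral.integral_sub (by apply Continuous.intervalIntegrable; fun_prop)
    (by apply Continuous.intervalIntegrable; fun_prop),
    intervalIntegral.integral_mul_const, intervalIntegral.integral_mul_const, coeff_cos, coeff_sin]
  ring


/-- For `(a,b) ≠ (0,0)`,
`∫_0^1 ∫_0^{2π} cos(ar cos φ + br sin φ)(1/r + cos φ) r dφ dr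
  = 2π ∫_0^1 J₀(√(a²+b²) r) dr`. -/
theorem oscillatory_integral_bessel (a b : ℝ) (hab : a ^ 2 + b ^ 2 ≠ 0) :
    (∫ r in (0:ℝ)..1, ∫ φ in (0:ℝ)..(2 * π),
        Real.cos (a * r * Real.cos φ + b * r * Real.sin φ)
          * (1 / r + Real.cos φ) * r)
      = 2 * π * ∫ r in (0:ℝ)..1, besselJ0 (Real.sqrt (a ^ 2 + b ^ 2) * r) := by
  have key : ∀ r ∈ Set.Ioc (0:ℝ) 1,
      (∫ φ in (0:ℝ)..(2*π), Real.cos (a*r*Real.cos φ + b*r*Real.sin φ)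
          * (1/r + Real.cos φ) * r)
        = 2 * π * besselJ0 (Real.sqrt (a^2+b^2) * r) := by
    intro r hr
    have hr0 : r ≠ 0 := ne_of_gt hr.1
    have hpt : ∀ φ : ℝ, Real.cos (a*r*Real.cos φ + b*r*Real.sin φ)
          * (1/r + Real.cos φ) * r
        = Real.cos ((a*r)*Real.cos φ + (b*r)*Real.sin φ)
          + Real.cos ((a*r)*Real.cos φ + (b*r)*Real.sin φ) * Real.cos φ * r := by
      intro φ
      have : a*r*Real.cos φ + b*r*Real.sin φ = (a*r)*Real.cos φ + (b*r)*Real.sin φ := by ring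
      rw [this]
      field_simp
    simp_rw [hpt]
    rw [intervalIntegral.integral_add (by apply Continuous.intervalIntegrable; fun_prop)
      (by apply Continuous.intervalIntegrable; fun_prop)]
    have h2 : (∫ φ in (0:ℝ)..(2*π),
        Real.cos ((a*r)*Real.cos φ + (b*r)*Real.sin φ) * Real.cos φ * r)
        = (∫ φ in (0:ℝ)..(2*π),
          Real.cos ((a*r)*Real.cos φ + (b*r)*Real.sin φ) * Real.cos φ) * r :=
      intervalIntegral.integral_mul_const r _
    rw [h2, rot_zeroth, rot_first]
    have hs : Real.sqrt ((a*r)^2 + (b*r)^2) = Real.sqrt (a^2+b^2) * r := by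
      rw [show (a*r)^2+(b*r)^2 = (a^2+b^2)*r^2 by ring,
        Real.sqrt_mul (by positivity), Real.sqrt_sq hr.1.le]
    rw [hs]
    ring
  rw [← intervalIntegral.integral_const_mul]
  apply intervalIntegral.integral_congr_ae
  filter_upwards with r hr
  rw [Set.uIoc_of_le (by norm_num : (0:ℝ) ≤ 1)] at hr
  exact key r hr
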